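/- Let (G, X) be a self-similar group action. There exist maps A : G × FG(X) → FG(X) and R : G × FG(X) → G satisfying the axioms (SS1)–(SS8) with the free group FG(X) in place of X*, and extending the given action and restriction (that is, A(g, ι(u)) = ι(g·u) and R(g, ι(u)) = g|_u for all g ∈ G and u ∈ X*), if and only if the action is symmetric. -/

import Mathlib

universe u v w

/-- A self-similar group action `(G, X)`: a group `G`, a set `X`, an action map
`G × X* → X*` and a restriction map `G × X* → G` satisfying (SS1)–(SS8). -/
structure SelfSimilarAction (G : Type u) [Group G] (X : Type v) where
  act : G → FreeMonoid X → FreeMonoid X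
  res : G → FreeMonoid X → G
  /-- (SS1) `1 · u = u` -/
  one_act : ∀ u : FreeMonoid X, act 1 u = u
  /-- (SS2) `(gh) · u = g · (h · u)` -/
  mul_act : ∀ (g h : G) (u : FreeMonoid X), act (g * h) u = act g (act h u)
  /-- (SS3) `g · 1 = 1` -/
  act_one : ∀ g : G, act g 1 = 1
  /-- (SS4) `g · (uv) = (g · u)((g|_u) · v)` -/
  act_mul : ∀ (g : G) (u v : FreeMonoid X), act g (u * v) = act g u * act (res g u) v
  /-- (SS5) `g|_1 = g` -/
  res_one : ∀ g : G, res g 1 = g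
  /-- (SS6) `g|_{uv} = (g|_u)|_v` -/
  res_mul : ∀ (g : G) (u v : FreeMonoid X), res g (u * v) = res (res g u) v
  /-- (SS7) `1|_u = 1` -/
  one_res : ∀ u : FreeMonoid X, res 1 u = 1
  /-- (SS8) `(gh)|_u = (g|_{h·u})(h|_u)` -/
  mul_res : ∀ (g h : G) (u : FreeMonoid X), res (g * h) u = res g (act h u) * res h u

namespace Stmt12Aux

variable {G : Type u} [Group G] {X : Type v}
variable (A : SelfSimilarAction G X)
variable (hs : ∀ x : X, Function.Bijective fun g : G => A.res g (FreeMonoid.of x))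

/-- Inverse of the letter restriction map `ρ_x`. -/
noncomputable def rinv (x : X) (g : G) : G :=
  (Equiv.ofBijective _ (hs x)).symm g

lemma res_rinv (x : X) (g : G) : A.res (rinv A hs x g) (FreeMonoid.of x) = g :=
  (Equiv.ofBijective _ (hs x)).apply_symm_apply g

lemma rinv_res (x : X) (g : G) : rinv A hs x (A.res g (FreeMonoid.of x)) = g :=
  (Equiv.ofBijective (fun g : G => A.res g (FreeMonoid.of x)) (hs x)).symm_apply_apply g

/-- A positive word as a list of signed letters. -/
def toW (u : FreeMonoid X) : List (X × Bool) := u.toList.map (fun x => (x, true))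

lemma toW_one : toW (1 : FreeMonoid X) = [] := rfl

lemma toW_of_mul (x : X) (u : FreeMonoid X) :
    toW (FreeMonoid.of x * u) = (x, true) :: toW u := rfl

lemma toW_mul (u v : FreeMonoid X) : toW (u * v) = toW u ++ toW v := by
  simp [toW, FreeMonoid.toList_mul]

/-- Output block of signed letters for a single input signed letter. -/
noncomputable def emit (g : G) : X × Bool → List (X × Bool)
  | (x, true) => toW (A.act g (FreeMonoid.of x))
  | (x, false) => FreeGroup.invRev (toW (A.act (rinv A hs x g) (FreeMonoid.of x)))

/-- New state after processing a single signed letter. -/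
noncomputable def st (g : G) : X × Bool → G
  | (x, true) => A.res g (FreeMonoid.of x)
  | (x, false) => rinv A hs x g

/-- Extended restriction on lists of signed letters. -/
noncomputable def Rl : G → List (X × Bool) → G
  | g, [] => g
  | g, p :: t => Rl (st A hs g p) t

/-- Extended action on lists of signed letters. -/
noncomputable def Al : G → List (X × Bool) → List (X × Bool)
  | _, [] => []
  | g, p :: t => emit A hs g p ++ Al (st A hs g p) t

lemma Rl_append (l₁ l₂ : List (X × Bool)) : ∀ g : G,
    Rl A hs g (l₁ ++ l₂) = Rl A hs (Rl A hs g l₁) l₂ := by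
  induction l₁ with
  | nil => intro g; rfl
  | cons p t ih => intro g; exact ih (st A hs g p)

lemma Al_append (l₁ l₂ : List (X × Bool)) : ∀ g : G,
    Al A hs g (l₁ ++ l₂) = Al A hs g l₁ ++ Al A hs (Rl A hs g l₁) l₂ := by
  induction l₁ with
  | nil => intro g; rfl
  | cons p t ih =>
      intro g
      show emit A hs g p ++ Al A hs (st A hs g p) (t ++ l₂) =
        (emit A hs g p ++ Al A hs (st A hs g p) t) ++ Al A hs (Rl A hs (st A hs g p) t) l₂
      rw [ih, List.append_assoc]

/-- Extension property (restriction) on positive words. -/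
lemma Rl_toW (u : FreeMonoid X) : ∀ g : G, Rl A hs g (toW u) = A.res g u := by
  induction u using FreeMonoid.inductionOn' with
  | one => intro g; rw [toW_one, A.res_one]; rfl
  | of_mul x u ih =>
      intro g
      rw [toW_of_mul]
      show Rl A hs (st A hs g (x, true)) (toW u) = _
      rw [ih, st, A.res_mul]

/-- Extension property (action) on positive words. -/
lemma Al_toW (u : FreeMonoid X) : ∀ g : G, Al A hs g (toW u) = toW (A.act g u) := by
  induction u using FreeMonoid.inductionOn' with
  | one => intro g; rw [toW_one, A.act_one, toW_one]; rfl
  | of_mul x u ih =>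
      intro g
      rw [toW_of_mul]
      show emit A hs g (x, true) ++ Al A hs (st A hs g (x, true)) (toW u) = _
      rw [ih, st, emit, A.act_mul, toW_mul]

lemma invRev_append (l₁ l₂ : List (X × Bool)) :
    FreeGroup.invRev (l₁ ++ l₂) = FreeGroup.invRev l₂ ++ FreeGroup.invRev l₁ := by
  simp [FreeGroup.invRev]

/-- Behaviour on inverses of positive words. -/
lemma Q (u : FreeMonoid X) : ∀ g : G,
    A.res (Rl A hs g (FreeGroup.invRev (toW u))) u = g ∧
    Al A hs g (FreeGroup.invRev (toW u)) =
      FreeGroup.invRev (toW (A.act (Rl A hs g (FreeGroup.invRev (toW u))) u)) := by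
  induction u using FreeMonoid.inductionOn' with
  | one =>
      intro g
      refine ⟨?_, ?_⟩
      · rw [toW_one, FreeGroup.invRev_empty]; exact A.res_one g
      · rw [toW_one, FreeGroup.invRev_empty, A.act_one, toW_one, FreeGroup.invRev_empty]; rfl
  | of_mul x u ih =>
      intro g
      have hsplit : FreeGroup.invRev (toW (FreeMonoid.of x * u)) =
          FreeGroup.invRev (toW u) ++ [(x, false)] := by
        rw [toW_of_mul]
        show FreeGroup.invRev ([(x, true)] ++ toW u) = _
        rw [invRev_append]; rfl
      obtain ⟨ihn, iha⟩ := ih g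
      set g₁ := Rl A hs g (FreeGroup.invRev (toW u)) with hg₁
      have hR : Rl A hs g (FreeGroup.invRev (toW (FreeMonoid.of x * u))) =
          rinv A hs x g₁ := by
        rw [hsplit, Rl_append, ← hg₁]; rfl
      constructor
      · rw [hR, A.res_mul, res_rinv, ihn]
      · rw [hR, hsplit, Al_append, ← hg₁, iha]
        show _ ++ (emit A hs g₁ (x, false) ++ Al A hs (st A hs g₁ (x, false)) []) = _
        rw [emit, A.act_mul, res_rinv, toW_mul, invRev_append, Al]
        simp

lemma st_one (p : X × Bool) : st A hs 1 p = 1 := by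
  obtain ⟨x, b⟩ := p
  cases b
  · show rinv A hs x 1 = 1
    conv_lhs => rw [← A.one_res (FreeMonoid.of x)]
    exact rinv_res A hs x 1
  · exact A.one_res _

lemma emit_one (p : X × Bool) : emit A hs 1 p = [p] := by
  obtain ⟨x, b⟩ := p
  cases b
  · show FreeGroup.invRev (toW (A.act (rinv A hs x 1) (FreeMonoid.of x))) = _
    have h1 : rinv A hs x 1 = 1 := st_one A hs (x, false)
    rw [h1, A.one_act]
    rfl
  · show toW (A.act 1 (FreeMonoid.of x)) = _
    rw [A.one_act]; rfl

lemma Al_one (l : List (X × Bool)) : Al A hs 1 l = l := by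
  induction l with
  | nil => rfl
  | cons p t ih => rw [Al, st_one, emit_one, ih]; rfl

lemma Rl_one (l : List (X × Bool)) : Rl A hs 1 l = 1 := by
  induction l with
  | nil => rfl
  | cons p t ih => rw [Rl, st_one]; exact ih

lemma emit_mul (g h : G) (p : X × Bool) :
    emit A hs (g * h) p = Al A hs g (emit A hs h p) ∧
    st A hs (g * h) p = Rl A hs g (emit A hs h p) * st A hs h p := by
  obtain ⟨x, b⟩ := p
  cases b
  · -- negative letter
    set h' := rinv A hs x h with hh'
    set u := A.act h' (FreeMonoid.of x) with hu
    have he : emit A hs h (x, false) = FreeGroup.invRev (toW u) := rfl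
    obtain ⟨hq1, hq2⟩ := Q A hs u g
    set g₂ := Rl A hs g (FreeGroup.invRev (toW u)) with hg₂
    have hres : A.res (g₂ * h') (FreeMonoid.of x) = g * h := by
      rw [A.mul_res, ← hu, hq1, hh', res_rinv]
    have hst : rinv A hs x (g * h) = g₂ * h' := by
      apply (hs x).injective
      show A.res (rinv A hs x (g * h)) _ = A.res (g₂ * h') _
      rw [hres, res_rinv]
    constructor
    · show FreeGroup.invRev (toW (A.act (rinv A hs x (g * h)) (FreeMonoid.of x))) = _
      rw [hst, A.mul_act, ← hu, he, hq2]
    · show rinv A hs x (g * h) = _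
      rw [hst, he, ← hg₂]; rfl
  · -- positive letter
    have he : emit A hs h (x, true) = toW (A.act h (FreeMonoid.of x)) := rfl
    constructor
    · show toW (A.act (g * h) (FreeMonoid.of x)) = _
      rw [he, Al_toW, A.mul_act]
    · show A.res (g * h) (FreeMonoid.of x) = _
      rw [he, Rl_toW, A.mul_res]; rfl

lemma mul_key : ∀ (l : List (X × Bool)) (g h : G),
    Al A hs (g * h) l = Al A hs g (Al A hs h l) ∧
    Rl A hs (g * h) l = Rl A hs g (Al A hs h l) * Rl A hs h l := by
  intro l
  induction l with
  | nil => intro g h; exact ⟨rfl, rfl⟩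
  | cons p t ih =>
      intro g h
      obtain ⟨he, hst⟩ := emit_mul A hs g h p
      obtain ⟨ia, ir⟩ := ih (Rl A hs g (emit A hs h p)) (st A hs h p)
      constructor
      · show emit A hs (g * h) p ++ Al A hs (st A hs (g * h) p) t = _
        rw [he, hst, ia, Al, Al_append]
      · show Rl A hs (st A hs (g * h) p) t = _
        rw [hst, ir, Al, Rl_append, Rl]

lemma cancel_st (g : G) (x : X) (b : Bool) :
    st A hs (st A hs g (x, b)) (x, !b) = g := by
  cases b
  · exact res_rinv A hs x g
  · exact rinv_res A hs x g

lemma cancel_emit (g : G) (x : X) (b : Bool) :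
    FreeGroup.mk (emit A hs g (x, b) ++ emit A hs (st A hs g (x, b)) (x, !b)) = 1 := by
  cases b
  · -- b = false
    have h1 : emit A hs g (x, false) =
        FreeGroup.invRev (toW (A.act (rinv A hs x g) (FreeMonoid.of x))) := rfl
    have h2 : emit A hs (st A hs g (x, false)) (x, !false) =
        toW (A.act (rinv A hs x g) (FreeMonoid.of x)) := rfl
    rw [h1, h2, ← FreeGroup.mul_mk, ← FreeGroup.inv_mk, inv_mul_cancel]
  · -- b = true
    have h1 : emit A hs g (x, true) = toW (A.act g (FreeMonoid.of x)) := rfl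
    have h2 : emit A hs (st A hs g (x, true)) (x, !true) =
        FreeGroup.invRev (toW (A.act (rinv A hs x (A.res g (FreeMonoid.of x)))
          (FreeMonoid.of x))) := rfl
    rw [h1, h2, rinv_res, ← FreeGroup.mul_mk, ← FreeGroup.inv_mk, mul_inv_cancel]

lemma Rl_step {L₁ L₂ : List (X × Bool)} (h : FreeGroup.Red.Step L₁ L₂) (g : G) :
    Rl A hs g L₁ = Rl A hs g L₂ := by
  cases h with
  | @not La Lb x b =>
      rw [Rl_append, Rl_append]
      show Rl A hs (st A hs (st A hs (Rl A hs g La) (x, b)) (x, !b)) Lb = _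
      rw [cancel_st]

lemma Al_step {L₁ L₂ : List (X × Bool)} (h : FreeGroup.Red.Step L₁ L₂) (g : G) :
    FreeGroup.mk (Al A hs g L₁) = FreeGroup.mk (Al A hs g L₂) := by
  cases h with
  | @not La Lb x b =>
      have e1 : Al A hs g (La ++ (x, b) :: (x, !b) :: Lb) =
          Al A hs g La ++
            ((emit A hs (Rl A hs g La) (x, b) ++
              emit A hs (st A hs (Rl A hs g La) (x, b)) (x, !b)) ++
              Al A hs (Rl A hs g La) Lb) := by
        rw [Al_append]
        show Al A hs g La ++
            (emit A hs (Rl A hs g La) (x, b) ++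
              (emit A hs (st A hs (Rl A hs g La) (x, b)) (x, !b) ++
                Al A hs (st A hs (st A hs (Rl A hs g La) (x, b)) (x, !b)) Lb)) = _
        rw [cancel_st, List.append_assoc]
      rw [e1, ← FreeGroup.mul_mk, ← FreeGroup.mul_mk, cancel_emit, one_mul,
        FreeGroup.mul_mk, ← Al_append]

/-- Extended restriction on the free group. -/
noncomputable def Rext (g : G) : FreeGroup X → G :=
  Quot.lift (Rl A hs g) (fun _ _ h => Rl_step A hs h g)

/-- Extended action on the free group. -/
noncomputable def Aext (g : G) : FreeGroup X → FreeGroup X :=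
  Quot.lift (fun L => FreeGroup.mk (Al A hs g L)) (fun _ _ h => Al_step A hs h g)

lemma Rext_mk (g : G) (L : List (X × Bool)) :
    Rext A hs g (FreeGroup.mk L) = Rl A hs g L := rfl

lemma Aext_mk (g : G) (L : List (X × Bool)) :
    Aext A hs g (FreeGroup.mk L) = FreeGroup.mk (Al A hs g L) := rfl

lemma lift_of_eq_mk_toW (u : FreeMonoid X) :
    FreeMonoid.lift FreeGroup.of u = FreeGroup.mk (toW u) := by
  induction u using FreeMonoid.inductionOn' with
  | one => rw [map_one, toW_one]; rfl
  | of_mul x u ih =>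
      rw [map_mul, FreeMonoid.lift_eval_of, ih, toW_of_mul]
      show FreeGroup.mk [(x, true)] * FreeGroup.mk (toW u) = _
      rw [FreeGroup.mul_mk]; rfl

end Stmt12Aux

open Stmt12Aux in
/-- the action and restriction of a self-similar group action extend to maps
`A : G × FG(X) → FG(X)` and `R : G × FG(X) → G` satisfying (SS1)–(SS8) iff the action is
symmetric (each `ρ_x`, `x ∈ X`, is bijective). -/
theorem stmt12 (G : Type u) [Group G] (X : Type v) (A : SelfSimilarAction G X) :
    (∃ (Aext : G → FreeGroup X → FreeGroup X) (Rext : G → FreeGroup X → G),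
      (∀ x : FreeGroup X, Aext 1 x = x) ∧
      (∀ (g h : G) (x : FreeGroup X), Aext (g * h) x = Aext g (Aext h x)) ∧
      (∀ g : G, Aext g 1 = 1) ∧
      (∀ (g : G) (x y : FreeGroup X), Aext g (x * y) = Aext g x * Aext (Rext g x) y) ∧
      (∀ g : G, Rext g 1 = g) ∧
      (∀ (g : G) (x y : FreeGroup X), Rext g (x * y) = Rext (Rext g x) y) ∧
      (∀ x : FreeGroup X, Rext (1 : G) x = 1) ∧
      (∀ (g h : G) (x : FreeGroup X), Rext (g * h) x = Rext g (Aext h x) * Rext h x) ∧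
      (∀ (g : G) (u : FreeMonoid X),
        Aext g (FreeMonoid.lift FreeGroup.of u) = FreeMonoid.lift FreeGroup.of (A.act g u)) ∧
      (∀ (g : G) (u : FreeMonoid X),
        Rext g (FreeMonoid.lift FreeGroup.of u) = A.res g u)) ↔
    (∀ x : X, Function.Bijective fun g : G => A.res g (FreeMonoid.of x)) := by
  constructor
  · rintro ⟨Ae, Re, _h1, _h2, _h3, _h4, h5, h6, _h7, _h8, _h9, h10⟩ x
    have key : ∀ g : G, Re g (FreeGroup.of x) = A.res g (FreeMonoid.of x) := by
      intro g
      have := h10 g (FreeMonoid.of x)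
      rwa [FreeMonoid.lift_eval_of] at this
    rw [Function.bijective_iff_has_inverse]
    refine ⟨fun g => Re g (FreeGroup.of x)⁻¹, ?_, ?_⟩
    · intro g
      show Re (A.res g (FreeMonoid.of x)) (FreeGroup.of x)⁻¹ = g
      rw [← key g, ← h6, mul_inv_cancel, h5]
    · intro g
      show A.res (Re g (FreeGroup.of x)⁻¹) (FreeMonoid.of x) = g
      rw [← key, ← h6, inv_mul_cancel, h5]
  · intro hs
    refine ⟨Aext A hs, Rext A hs, ?_, ?_, ?_, ?_, ?_, ?_, ?_, ?_, ?_, ?_⟩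
    · intro w
      refine Quot.inductionOn w fun L => ?_
      show FreeGroup.mk (Al A hs 1 L) = FreeGroup.mk L
      rw [Al_one]
    · intro g h w
      refine Quot.inductionOn w fun L => ?_
      show FreeGroup.mk (Al A hs (g * h) L) = FreeGroup.mk (Al A hs g (Al A hs h L))
      rw [(mul_key A hs L g h).1]
    · intro g
      show FreeGroup.mk (Al A hs g []) = FreeGroup.mk []
      rfl
    · intro g w₁ w₂
      refine Quot.inductionOn w₁ fun L₁ => Quot.inductionOn w₂ fun L₂ => ?_
      show FreeGroup.mk (Al A hs g (L₁ ++ L₂)) =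
        FreeGroup.mk (Al A hs g L₁) * FreeGroup.mk (Al A hs (Rl A hs g L₁) L₂)
      rw [Al_append, FreeGroup.mul_mk]
    · intro g; rfl
    · intro g w₁ w₂
      refine Quot.inductionOn w₁ fun L₁ => Quot.inductionOn w₂ fun L₂ => ?_
      show Rl A hs g (L₁ ++ L₂) = Rl A hs (Rl A hs g L₁) L₂
      rw [Rl_append]
    · intro w
      refine Quot.inductionOn w fun L => ?_
      show Rl A hs 1 L = 1
      rw [Rl_one]
    · intro g h w
      refine Quot.inductionOn w fun L => ?_
      show Rl A hs (g * h) L = Rl A hs g (Al A hs h L) * Rl A hs h L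
      rw [(mul_key A hs L g h).2]
    · intro g u
      rw [lift_of_eq_mk_toW, lift_of_eq_mk_toW, Aext_mk, Al_toW]
    · intro g u
      rw [lift_of_eq_mk_toW, Rext_mk, Rl_toW]
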